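/- Let θ ∈ ℝ^d be a unit vector and let g : ℝ → ℝ satisfy |g(y) − g(y′)| ≤ C|y − y′|^α for all y, y′ ∈ ℝ with constant C < ∞ and exponent α ∈ (0,1). Let f(x) = g(θᵀx) and suppose σ² = Var(f(X)) > 0 for X ~ N(0, I_d). Then the mean dimension of f satisfies ν(f) ≤ (C/σ)² · 2^{α−1} · M_{2α} · d^{1−α}. -/

import Mathlib

open MeasureTheory ProbabilityTheory Real Filter
open scoped NNReal ENNReal

noncomputable section

/-- Standard Gaussian measure `N(0, I_d)` on `ℝ^d`. -/
def stdGaussian (d : ℕ) : Measure (Fin d → ℝ) :=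
  Measure.pi fun _ => gaussianReal 0 1

/-- Sobol' total index `τ̄²_j(f) = (1/2)·E[(f(X) − f(X_{−j}:Z_j))²]`. -/
def sobolTau (d : ℕ) (f : (Fin d → ℝ) → ℝ) (j : Fin d) : ℝ :=
  (1 / 2) * ∫ p : (Fin d → ℝ) × (Fin d → ℝ),
    (f p.1 - f (Function.update p.1 j (p.2 j))) ^ 2
      ∂((stdGaussian d).prod (stdGaussian d))

/-- Mean dimension `ν(f) = (Σ_j τ̄²_j(f)) / Var(f(X))`. -/
def meanDim (d : ℕ) (f : (Fin d → ℝ) → ℝ) : ℝ :=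
  (∑ j, sobolTau d f j) / variance f (stdGaussian d)

/-- Gaussian fractional absolute moment `M_η = 2^{η/2} Γ((η+1)/2) / √π`. -/
def Mmom (η : ℝ) : ℝ := 2 ^ (η / 2) / Real.sqrt π * Real.Gamma ((η + 1) / 2)

/-- Standard normal CDF `Φ`. -/
def Phi (t : ℝ) : ℝ := ((gaussianReal 0 1) (Set.Iic t)).toReal

/-- Standard normal density `φ`. -/
def gpdf (x : ℝ) : ℝ := Real.exp (-x ^ 2 / 2) / Real.sqrt (2 * π)


lemma pdf_prod_eq (w x : ℝ) :
    gaussianPDFReal 0 1 x * gaussianPDFReal 0 1 (x - w)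
      = (2 * π)⁻¹ * rexp (-w ^ 2 / 4) * rexp (-(1 : ℝ) * (x - w / 2) ^ 2) := by
  simp only [gaussianPDFReal, NNReal.coe_one, mul_one, sub_zero]
  have he : rexp (-x ^ 2 / 2) * rexp (-(x - w) ^ 2 / 2)
      = rexp (-w ^ 2 / 4) * rexp (-(1 : ℝ) * (x - w / 2) ^ 2) := by
    rw [← Real.exp_add, ← Real.exp_add]; congr 1; ring
  rw [show ((√(2 * π))⁻¹ * rexp (-x ^ 2 / 2)) * ((√(2 * π))⁻¹ * rexp (-(x - w) ^ 2 / 2))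
      = ((√(2 * π))⁻¹ * (√(2 * π))⁻¹) * (rexp (-x ^ 2 / 2) * rexp (-(x - w) ^ 2 / 2)) by ring]
  rw [he, ← mul_inv, Real.mul_self_sqrt (by positivity)]
  ring

lemma integrable_pdf_prod (w : ℝ) :
    Integrable (fun x => gaussianPDFReal 0 1 x * gaussianPDFReal 0 1 (x - w)) := by
  simp_rw [pdf_prod_eq w]
  exact ((integrable_exp_neg_mul_sq one_pos).comp_sub_right (w / 2)).const_mul _

lemma const_eq (w : ℝ) :
    (2 * π)⁻¹ * rexp (-w ^ 2 / 4) * √(π / 1) = gaussianPDFReal 0 2 w := by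
  have hs : √((2 : ℝ) * π * ((2 : ℝ≥0) : ℝ)) = 2 * √π := by
    push_cast
    rw [show (2 : ℝ) * π * 2 = 2 ^ 2 * π by ring, Real.sqrt_mul (by positivity),
      Real.sqrt_sq (by norm_num)]
  simp only [gaussianPDFReal, sub_zero, div_one, hs]
  have h1 : (2 * π)⁻¹ * √π * (2 * √π) = 1 := by
    rw [show (2 * π)⁻¹ * √π * (2 * √π) = 2 * (√π * √π) * (2 * π)⁻¹ by ring,
      Real.mul_self_sqrt pi_pos.le, mul_inv_cancel₀ (by positivity)]
  have h2 : (2 * π)⁻¹ * √π = (2 * √π)⁻¹ := eq_inv_of_mul_eq_one_left h1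
  have h3 : -w ^ 2 / (2 * ((2 : ℝ≥0) : ℝ)) = -w ^ 2 / 4 := by push_cast; norm_num
  rw [h3]
  linear_combination rexp (-w ^ 2 / 4) * h2

lemma lemB (w : ℝ) :
    ∫⁻ x, gaussianPDF 0 1 x * gaussianPDF 0 1 (x - w) = gaussianPDF 0 2 w := by
  have h1 : ∀ x, gaussianPDF 0 1 x * gaussianPDF 0 1 (x - w)
      = ENNReal.ofReal (gaussianPDFReal 0 1 x * gaussianPDFReal 0 1 (x - w)) := fun x =>
    (ENNReal.ofReal_mul (gaussianPDFReal_nonneg _ _ _)).symm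
  simp_rw [h1]
  rw [← ofReal_integral_eq_lintegral_ofReal (integrable_pdf_prod w)
    (Filter.Eventually.of_forall fun x =>
      mul_nonneg (gaussianPDFReal_nonneg _ _ _) (gaussianPDFReal_nonneg _ _ _))]
  unfold gaussianPDF
  congr 1
  simp_rw [pdf_prod_eq w]
  rw [integral_const_mul, integral_sub_right_eq_self (μ := volume)
    (fun x => rexp (-(1 : ℝ) * x ^ 2)) (w / 2), integral_gaussian]
  exact const_eq w

lemma lemA (h : ℝ → ℝ≥0∞) (hh : Measurable h) :
    ∫⁻ q : ℝ × ℝ, h (q.1 - q.2) ∂((gaussianReal 0 1).prod (gaussianReal 0 1))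
      = ∫⁻ w, h w ∂(gaussianReal 0 2) := by
  have hγ : gaussianReal 0 1 = volume.withDensity (gaussianPDF 0 1) :=
    gaussianReal_of_var_ne_zero 0 one_ne_zero
  have h2m : gaussianReal 0 2 = volume.withDensity (gaussianPDF 0 2) :=
    gaussianReal_of_var_ne_zero 0 (by norm_num)
  have hpdf : Measurable (gaussianPDF 0 1) := measurable_gaussianPDF 0 1
  have hFmeas : ∀ x : ℝ, Measurable fun z => gaussianPDF 0 1 z * h (x - z) :=
    fun x => hpdf.mul (hh.comp (measurable_const.sub measurable_id))
  have hGmeas : Measurable fun q : ℝ × ℝ => gaussianPDF 0 1 (q.1 - q.2) * h q.2 :=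
    (hpdf.comp (measurable_fst.sub measurable_snd)).mul (hh.comp measurable_snd)
  have hinner : Measurable fun x : ℝ => ∫⁻ u, gaussianPDF 0 1 (x - u) * h u ∂volume :=
    Measurable.lintegral_prod_right hGmeas
  have step2 : ∀ x : ℝ, ∫⁻ z, h (x - z) ∂(gaussianReal 0 1)
      = ∫⁻ u, gaussianPDF 0 1 (x - u) * h u ∂volume := by
    intro x
    have hg : Measurable fun z : ℝ => h (x - z) := hh.comp (measurable_const.sub measurable_id)
    rw [hγ, lintegral_withDensity_eq_lintegral_mul volume hpdf hg]
    simp only [Pi.mul_apply]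
    rw [← (Measure.measurePreserving_sub_left volume x).lintegral_comp (hFmeas x)]
    refine lintegral_congr fun u => ?_
    rw [sub_sub_cancel]
  calc ∫⁻ q : ℝ × ℝ, h (q.1 - q.2) ∂((gaussianReal 0 1).prod (gaussianReal 0 1))
      = ∫⁻ x, ∫⁻ z, h (x - z) ∂(gaussianReal 0 1) ∂(gaussianReal 0 1) :=
        lintegral_prod _ (hh.comp (measurable_fst.sub measurable_snd)).aemeasurable
    _ = ∫⁻ x, ∫⁻ u, gaussianPDF 0 1 (x - u) * h u ∂volume ∂(gaussianReal 0 1) :=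
        lintegral_congr step2
    _ = ∫⁻ x, gaussianPDF 0 1 x * ∫⁻ u, gaussianPDF 0 1 (x - u) * h u ∂volume ∂volume := by
        rw [hγ, lintegral_withDensity_eq_lintegral_mul volume hpdf hinner]
        simp only [Pi.mul_apply]
    _ = ∫⁻ x, ∫⁻ u, gaussianPDF 0 1 x * (gaussianPDF 0 1 (x - u) * h u) ∂volume ∂volume :=
        lintegral_congr fun x => (lintegral_const_mul _
          ((hpdf.comp (measurable_const.sub measurable_id)).mul hh)).symm
    _ = ∫⁻ u, ∫⁻ x, gaussianPDF 0 1 x * (gaussianPDF 0 1 (x - u) * h u) ∂volume ∂volume :=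
        lintegral_lintegral_swap
          (((hpdf.comp measurable_fst).mul
            ((hpdf.comp (measurable_fst.sub measurable_snd)).mul
              (hh.comp measurable_snd))).aemeasurable)
    _ = ∫⁻ u, (∫⁻ x, gaussianPDF 0 1 x * gaussianPDF 0 1 (x - u) ∂volume) * h u ∂volume := by
        refine lintegral_congr fun u => ?_
        have hm : Measurable fun x : ℝ => gaussianPDF 0 1 x * gaussianPDF 0 1 (x - u) :=
          hpdf.mul (hpdf.comp (measurable_sub_const u))
        rw [← lintegral_mul_const _ hm]
        exact lintegral_congr fun x => (mul_assoc _ _ _).symm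
    _ = ∫⁻ u, gaussianPDF 0 2 u * h u ∂volume := by
        refine lintegral_congr fun u => ?_
        rw [lemB]
    _ = ∫⁻ w, h w ∂(gaussianReal 0 2) := by
        rw [h2m, lintegral_withDensity_eq_lintegral_mul volume (measurable_gaussianPDF 0 2) hh]
        simp only [Pi.mul_apply]

instance (d : ℕ) : IsProbabilityMeasure (stdGaussian d) := by
  unfold _root_.stdGaussian; infer_instance

lemma stdGaussian_map_eval (d : ℕ) (j : Fin d) :
    (stdGaussian d).map (fun x => x j) = gaussianReal 0 1 := by
  refine Measure.ext fun s hs => ?_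
  rw [Measure.map_apply (measurable_pi_apply j) hs, _root_.stdGaussian]
  have hpre : (fun x : Fin d → ℝ => x j) ⁻¹' s
      = Set.pi Set.univ (Function.update (fun _ => Set.univ) j s) := Set.eval_preimage
  rw [hpre, Measure.pi_pi]
  have : ∀ i : Fin d, gaussianReal 0 1 (Function.update (fun _ => Set.univ) j s i)
      = if i = j then gaussianReal 0 1 s else 1 := by
    intro i
    rcases eq_or_ne i j with rfl | hij
    · simp
    · simp [Function.update_apply, hij]
  simp_rw [this]
  simp

lemma lintegral_pair_eval (d : ℕ) (j : Fin d) (h : ℝ → ℝ≥0∞) (hh : Measurable h) :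
    ∫⁻ p : (Fin d → ℝ) × (Fin d → ℝ), h (p.1 j - p.2 j)
        ∂((stdGaussian d).prod (stdGaussian d))
      = ∫⁻ w, h w ∂(gaussianReal 0 2) := by
  have hmapP : Measure.map (Prod.map (fun x : Fin d → ℝ => x j) (fun x : Fin d → ℝ => x j))
      ((stdGaussian d).prod (stdGaussian d)) = (gaussianReal 0 1).prod (gaussianReal 0 1) := by
    rw [← Measure.map_prod_map _ _ (measurable_pi_apply j) (measurable_pi_apply j),
      stdGaussian_map_eval]
  have hm : Measurable fun q : ℝ × ℝ => h (q.1 - q.2) :=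
    hh.comp (measurable_fst.sub measurable_snd)
  rw [← lemA h hh, ← hmapP,
    lintegral_map hm (Measurable.prodMap (measurable_pi_apply j) (measurable_pi_apply j))]
  rfl

lemma sqrt_four_pi : √((2 : ℝ) * π * ((2 : ℝ≥0) : ℝ)) = 2 * √π := by
  push_cast
  rw [show (2 : ℝ) * π * 2 = 2 ^ 2 * π by ring, Real.sqrt_mul (by positivity),
    Real.sqrt_sq (by norm_num)]

lemma pdf2_eq (w : ℝ) :
    gaussianPDFReal 0 2 w = (2 * √π)⁻¹ * rexp (-(1/4) * w ^ 2) := by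
  simp only [gaussianPDFReal, sub_zero, sqrt_four_pi]
  congr 1
  push_cast
  ring

lemma abs_rpow_le_one_add_sq {α : ℝ} (hα0 : 0 < α) (hα1 : α < 1) (w : ℝ) :
    |w| ^ (2 * α) ≤ 1 + w ^ 2 := by
  rcases le_total |w| 1 with h | h
  · have := Real.rpow_le_one (abs_nonneg w) h (by positivity : (0:ℝ) ≤ 2 * α)
    nlinarith [sq_nonneg w]
  · have h1 : |w| ^ (2 * α) ≤ |w| ^ (2 : ℝ) :=
      Real.rpow_le_rpow_of_exponent_le h (by nlinarith)
    have h2 : |w| ^ (2 : ℝ) = w ^ 2 := by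
      rw [show (2:ℝ) = ((2:ℕ):ℝ) by norm_num, Real.rpow_natCast, sq_abs]
    nlinarith [h1, h2.symm.le]

lemma rpow_two_real (x : ℝ) : x ^ (2 : ℝ) = x ^ 2 := by
  rw [show (2:ℝ) = ((2:ℕ):ℝ) by norm_num, Real.rpow_natCast]

lemma integrable_pdf2_rpow {α : ℝ} (hα0 : 0 < α) (hα1 : α < 1) :
    Integrable (fun w => gaussianPDFReal 0 2 w * |w| ^ (2 * α)) := by
  have hmeas : Measurable fun w : ℝ => gaussianPDFReal 0 2 w * |w| ^ (2 * α) :=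
    (measurable_gaussianPDFReal 0 2).mul (measurable_abs.pow_const _)
  have h1 : Integrable (fun w : ℝ => rexp (-(1/4) * w ^ 2)) :=
    integrable_exp_neg_mul_sq (by norm_num)
  have h2 : Integrable (fun w : ℝ => w ^ 2 * rexp (-(1/4) * w ^ 2)) := by
    have := integrable_rpow_mul_exp_neg_mul_sq (by norm_num : (0:ℝ) < 1/4)
      (s := 2) (by norm_num)
    simpa [rpow_two_real] using this
  have hmaj : Integrable (fun w : ℝ => (2*√π)⁻¹ * ((1 + w ^ 2) * rexp (-(1/4) * w ^ 2))) := by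
    refine Integrable.const_mul ?_ _
    have : (fun w : ℝ => (1 + w ^ 2) * rexp (-(1/4) * w ^ 2))
        = fun w => rexp (-(1/4) * w ^ 2) + w ^ 2 * rexp (-(1/4) * w ^ 2) := by
      funext w; ring
    rw [this]
    exact h1.add h2
  refine hmaj.mono' hmeas.aestronglyMeasurable (Filter.Eventually.of_forall fun w => ?_)
  have hnn : 0 ≤ gaussianPDFReal 0 2 w * |w| ^ (2 * α) :=
    mul_nonneg (gaussianPDFReal_nonneg _ _ _) (Real.rpow_nonneg (abs_nonneg _) _)
  rw [Real.norm_of_nonneg hnn, pdf2_eq]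
  have hb := abs_rpow_le_one_add_sq hα0 hα1 w
  have he : (0:ℝ) < rexp (-(1/4) * w ^ 2) := Real.exp_pos _
  have hc : (0:ℝ) ≤ (2*√π)⁻¹ := by positivity
  calc (2*√π)⁻¹ * rexp (-(1/4) * w ^ 2) * |w| ^ (2 * α)
      ≤ (2*√π)⁻¹ * rexp (-(1/4) * w ^ 2) * (1 + w ^ 2) := by
        exact mul_le_mul_of_nonneg_left hb (by positivity)
    _ = (2*√π)⁻¹ * ((1 + w ^ 2) * rexp (-(1/4) * w ^ 2)) := by ring

lemma moment_val {α : ℝ} (hα0 : 0 < α) (hα1 : α < 1) :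
    ∫ w, gaussianPDFReal 0 2 w * |w| ^ (2 * α) = 2 ^ α * Mmom (2 * α) := by
  have h22 : (2:ℝ) ^ ((2:ℕ):ℝ) = 4 := by rw [Real.rpow_natCast]; norm_num
  have hIoi : ∫ x in Set.Ioi (0:ℝ), x ^ (2*α) * rexp (-(1/4) * x ^ 2)
      = ((1:ℝ)/4) ^ (-(2*α+1)/2) * (1/2) * Real.Gamma ((2*α+1)/2) := by
    have hcg : ∀ x ∈ Set.Ioi (0:ℝ), x ^ (2*α) * rexp (-(1/4) * x ^ 2)
        = x ^ (2*α) * rexp (-(1/4) * x ^ (2:ℝ)) := fun x _ => by rw [rpow_two_real]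
    rw [setIntegral_congr_fun measurableSet_Ioi hcg,
      integral_rpow_mul_exp_neg_mul_rpow two_pos (by linarith) (by norm_num : (0:ℝ) < 1/4)]
  have h4 : ((1:ℝ)/4) ^ (-(2*α+1)/2) = 2 ^ (2*α+1) := by
    rw [show (1:ℝ)/4 = (2:ℝ) ^ (-((2:ℕ):ℝ)) by
        rw [Real.rpow_neg two_pos.le, h22]; norm_num,
      ← Real.rpow_mul two_pos.le]
    congr 1
    push_cast
    ring
  calc ∫ w, gaussianPDFReal 0 2 w * |w| ^ (2 * α)
      = (2*√π)⁻¹ * ∫ w, (fun t : ℝ => t ^ (2*α) * rexp (-(1/4) * t ^ 2)) |w| := by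
        rw [← integral_const_mul]
        congr 1
        funext w
        rw [pdf2_eq]
        rw [show ((fun t : ℝ => t ^ (2*α) * rexp (-(1/4) * t ^ 2)) |w|)
            = |w| ^ (2*α) * rexp (-(1/4) * |w| ^ 2) from rfl, sq_abs]
        ring
    _ = (2*√π)⁻¹ * (2 * ∫ x in Set.Ioi (0:ℝ), x ^ (2*α) * rexp (-(1/4) * x ^ 2)) := by
        exact congrArg _ (integral_comp_abs (f := fun t : ℝ => t ^ (2*α) * rexp (-(1/4) * t ^ 2)))
    _ = (2*√π)⁻¹ * (2 * (2 ^ (2*α+1) * (1/2) * Real.Gamma ((2*α+1)/2))) := by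
        rw [hIoi, h4]
    _ = 2 ^ α * Mmom (2 * α) := by
        unfold Mmom
        rw [show (2*α)/2 = α by ring, Real.rpow_add two_pos (2*α) 1, Real.rpow_one,
          show 2*α = α + α by ring, Real.rpow_add two_pos α α]
        have hsp : √π ≠ 0 := by positivity
        field_simp

lemma Mmom_pos {η : ℝ} (hη : -1 < η) : 0 < Mmom η := by
  unfold Mmom
  have h1 : (0:ℝ) < 2 ^ (η/2) := Real.rpow_pos_of_pos two_pos _
  have h2 : (0:ℝ) < Real.Gamma ((η+1)/2) := Real.Gamma_pos_of_pos (by linarith)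
  have h3 : (0:ℝ) < √π := Real.sqrt_pos.mpr pi_pos
  positivity

lemma lintegral_moment {α : ℝ} (hα0 : 0 < α) (hα1 : α < 1) :
    ∫⁻ w, ENNReal.ofReal (|w| ^ (2*α)) ∂(gaussianReal 0 2)
      = ENNReal.ofReal (2 ^ α * Mmom (2*α)) := by
  have hmeas : Measurable fun w : ℝ => ENNReal.ofReal (|w| ^ (2*α)) :=
    (measurable_abs.pow_const _).ennreal_ofReal
  rw [gaussianReal_of_var_ne_zero 0 (by norm_num),
    lintegral_withDensity_eq_lintegral_mul volume (measurable_gaussianPDF 0 2) hmeas]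
  simp only [Pi.mul_apply, gaussianPDF]
  have hcg : ∀ w : ℝ, ENNReal.ofReal (gaussianPDFReal 0 2 w) * ENNReal.ofReal (|w| ^ (2*α))
      = ENNReal.ofReal (gaussianPDFReal 0 2 w * |w| ^ (2*α)) := fun w =>
    (ENNReal.ofReal_mul (gaussianPDFReal_nonneg _ _ _)).symm
  simp_rw [hcg]
  rw [← ofReal_integral_eq_lintegral_ofReal (integrable_pdf2_rpow hα0 hα1)
    (Filter.Eventually.of_forall fun w =>
      mul_nonneg (gaussianPDFReal_nonneg _ _ _) (Real.rpow_nonneg (abs_nonneg _) _)),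
    moment_val hα0 hα1]

lemma key_lintegral (d : ℕ) (j : Fin d) {α : ℝ} (hα0 : 0 < α) (hα1 : α < 1) :
    ∫⁻ p : (Fin d → ℝ) × (Fin d → ℝ), ENNReal.ofReal (|p.1 j - p.2 j| ^ (2*α))
        ∂((stdGaussian d).prod (stdGaussian d))
      = ENNReal.ofReal (2 ^ α * Mmom (2*α)) :=
  (lintegral_pair_eval d j _ ((measurable_abs.pow_const _).ennreal_ofReal)).trans
    (lintegral_moment hα0 hα1)

lemma B_integrable (d : ℕ) (j : Fin d) {α : ℝ} (hα0 : 0 < α) (hα1 : α < 1) :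
    Integrable (fun p : (Fin d → ℝ) × (Fin d → ℝ) => |p.1 j - p.2 j| ^ (2*α))
      ((stdGaussian d).prod (stdGaussian d)) := by
  have hmeas : Measurable fun p : (Fin d → ℝ) × (Fin d → ℝ) => |p.1 j - p.2 j| ^ (2*α) :=
    (((measurable_pi_apply j).comp measurable_fst).sub
      ((measurable_pi_apply j).comp measurable_snd)).abs.pow_const _
  refine ⟨hmeas.aestronglyMeasurable, ?_⟩
  rw [hasFiniteIntegral_iff_ofReal (Filter.Eventually.of_forall fun p =>
    Real.rpow_nonneg (abs_nonneg _) _)]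
  rw [key_lintegral d j hα0 hα1]
  exact ENNReal.ofReal_lt_top

lemma B_integral (d : ℕ) (j : Fin d) {α : ℝ} (hα0 : 0 < α) (hα1 : α < 1) :
    ∫ p : (Fin d → ℝ) × (Fin d → ℝ), |p.1 j - p.2 j| ^ (2*α)
        ∂((stdGaussian d).prod (stdGaussian d))
      = 2 ^ α * Mmom (2*α) := by
  have hmeas : Measurable fun p : (Fin d → ℝ) × (Fin d → ℝ) => |p.1 j - p.2 j| ^ (2*α) :=
    (((measurable_pi_apply j).comp measurable_fst).sub
      ((measurable_pi_apply j).comp measurable_snd)).abs.pow_const _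
  rw [integral_eq_lintegral_of_nonneg_ae (Filter.Eventually.of_forall fun p =>
      Real.rpow_nonneg (abs_nonneg _) _) hmeas.aestronglyMeasurable,
    key_lintegral d j hα0 hα1,
    ENNReal.toReal_ofReal
      (mul_nonneg (Real.rpow_nonneg two_pos.le _) (Mmom_pos (by linarith)).le)]

lemma sum_update (d : ℕ) (θ : Fin d → ℝ) (j : Fin d) (x : Fin d → ℝ) (y : ℝ) :
    ∑ i, θ i * Function.update x j y i = (∑ i, θ i * x i) + θ j * (y - x j) := by
  have hfe : (fun i => θ i * Function.update x j y i)
      = Function.update (fun i => θ i * x i) j (θ j * y) := by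
    funext i
    rcases eq_or_ne i j with rfl | hij
    · simp
    · simp [Function.update_apply, hij]
  rw [hfe, Finset.sum_update_of_mem (Finset.mem_univ j)]
  have h2 := Finset.add_sum_erase Finset.univ (fun i => θ i * x i) (Finset.mem_univ j)
  rw [Finset.erase_eq] at h2
  linarith [h2]

lemma rpow_alpha_sq (t α : ℝ) : (|t| ^ α) ^ 2 = |t| ^ (2*α) := by
  rw [← Real.rpow_natCast (|t| ^ α) 2, ← Real.rpow_mul (abs_nonneg t)]
  norm_num
  rw [mul_comm]

lemma pointwise_bound (d : ℕ) (θ : Fin d → ℝ) (g : ℝ → ℝ) (C α : ℝ)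
    (hg : ∀ y y' : ℝ, |g y - g y'| ≤ C * |y - y'| ^ α)
    (f : (Fin d → ℝ) → ℝ) (hf : ∀ x, f x = g (∑ j, θ j * x j))
    (j : Fin d) (p : (Fin d → ℝ) × (Fin d → ℝ)) :
    (f p.1 - f (Function.update p.1 j (p.2 j))) ^ 2
      ≤ (C ^ 2 * |θ j| ^ (2*α)) * |p.1 j - p.2 j| ^ (2*α) := by
  rw [hf, hf, sum_update]
  set S := ∑ i, θ i * p.1 i with hS
  have hdiff : S - (S + θ j * (p.2 j - p.1 j)) = θ j * (p.1 j - p.2 j) := by ring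
  have habs : |g S - g (S + θ j * (p.2 j - p.1 j))|
      ≤ C * |θ j * (p.1 j - p.2 j)| ^ α := by
    have := hg S (S + θ j * (p.2 j - p.1 j))
    rwa [hdiff] at this
  have hsq : (g S - g (S + θ j * (p.2 j - p.1 j))) ^ 2
      ≤ (C * |θ j * (p.1 j - p.2 j)| ^ α) ^ 2 := by
    rw [← sq_abs]
    exact pow_le_pow_left₀ (abs_nonneg _) habs 2
  refine hsq.trans_eq ?_
  rw [mul_pow, rpow_alpha_sq, abs_mul,
    Real.mul_rpow (abs_nonneg _) (abs_nonneg _)]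
  ring

lemma tau_bound (d : ℕ) (θ : Fin d → ℝ) (g : ℝ → ℝ) (C α : ℝ)
    (hα0 : 0 < α) (hα1 : α < 1)
    (hg : ∀ y y' : ℝ, |g y - g y'| ≤ C * |y - y'| ^ α)
    (f : (Fin d → ℝ) → ℝ) (hf : ∀ x, f x = g (∑ j, θ j * x j)) (j : Fin d) :
    sobolTau d f j ≤ 2 ^ (α - 1) * C ^ 2 * Mmom (2*α) * |θ j| ^ (2*α) := by
  have hint : ∫ p : (Fin d → ℝ) × (Fin d → ℝ),
      (f p.1 - f (Function.update p.1 j (p.2 j))) ^ 2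
        ∂((stdGaussian d).prod (stdGaussian d))
      ≤ ∫ p : (Fin d → ℝ) × (Fin d → ℝ),
        (C ^ 2 * |θ j| ^ (2*α)) * |p.1 j - p.2 j| ^ (2*α)
          ∂((stdGaussian d).prod (stdGaussian d)) := by
    refine integral_mono_of_nonneg (Filter.Eventually.of_forall fun p => sq_nonneg _)
      ((B_integrable d j hα0 hα1).const_mul _)
      (Filter.Eventually.of_forall fun p =>
        pointwise_bound d θ g C α hg f hf j p)
  have hval : ∫ p : (Fin d → ℝ) × (Fin d → ℝ),
      (C ^ 2 * |θ j| ^ (2*α)) * |p.1 j - p.2 j| ^ (2*α)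
        ∂((stdGaussian d).prod (stdGaussian d))
      = (C ^ 2 * |θ j| ^ (2*α)) * (2 ^ α * Mmom (2*α)) := by
    rw [integral_const_mul, B_integral d j hα0 hα1]
  have h2a : (2:ℝ) ^ (α - 1) = 2 ^ α / 2 := by
    rw [Real.rpow_sub two_pos, Real.rpow_one]
  unfold sobolTau
  calc (1/2 : ℝ) * ∫ p : (Fin d → ℝ) × (Fin d → ℝ),
        (f p.1 - f (Function.update p.1 j (p.2 j))) ^ 2
          ∂((stdGaussian d).prod (stdGaussian d))
      ≤ (1/2 : ℝ) * ((C ^ 2 * |θ j| ^ (2*α)) * (2 ^ α * Mmom (2*α))) := by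
        rw [← hval]
        linarith [hint]
    _ = 2 ^ (α - 1) * C ^ 2 * Mmom (2*α) * |θ j| ^ (2*α) := by
        rw [h2a]; ring

lemma sum_rpow_le (d : ℕ) (hd : 1 ≤ d) (θ : Fin d → ℝ) (hθ : ∑ j, θ j ^ 2 = 1)
    {α : ℝ} (hα0 : 0 < α) (hα1 : α < 1) :
    ∑ j, |θ j| ^ (2*α) ≤ (d : ℝ) ^ (1 - α) := by
  have hd0 : (0:ℝ) < d := by exact_mod_cast Nat.lt_of_lt_of_le Nat.zero_lt_one hd
  have hp : (1:ℝ) ≤ 1/α := by rw [le_div_iff₀ hα0]; linarith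
  have hmean := Real.arith_mean_le_rpow_mean Finset.univ (fun _ => (d:ℝ)⁻¹)
    (fun i => |θ i| ^ (2*α)) (fun i _ => by positivity)
    (by simp [Finset.sum_const, Finset.card_univ]; field_simp)
    (fun i _ => Real.rpow_nonneg (abs_nonneg _) _) hp
  have hzp : ∀ i : Fin d, (|θ i| ^ (2*α)) ^ ((1:ℝ)/α) = θ i ^ 2 := by
    intro i
    rw [← Real.rpow_mul (abs_nonneg _), show 2*α*(1/α) = 2 by field_simp,
      rpow_two_real, sq_abs]
  simp_rw [hzp] at hmean
  rw [← Finset.mul_sum, ← Finset.mul_sum, hθ, mul_one, one_div_one_div] at hmean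
  have hfin : (d:ℝ)⁻¹ * ∑ j, |θ j| ^ (2*α) ≤ ((d:ℝ)⁻¹) ^ α := hmean
  have hexp : ((d:ℝ)⁻¹) ^ α = ((d:ℝ) ^ α)⁻¹ := Real.inv_rpow hd0.le α
  have hgoal : (d:ℝ) ^ (1 - α) = (d:ℝ) / (d:ℝ) ^ α := by
    rw [Real.rpow_sub hd0, Real.rpow_one]
  rw [hgoal]
  rw [hexp] at hfin
  rw [div_eq_mul_inv]
  calc ∑ j, |θ j| ^ (2*α) = (d:ℝ) * ((d:ℝ)⁻¹ * ∑ j, |θ j| ^ (2*α)) := by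
        field_simp
    _ ≤ (d:ℝ) * ((d:ℝ) ^ α)⁻¹ := mul_le_mul_of_nonneg_left hfin hd0.le

/-- Corollary 3.3 (Hölder ridge functions, `r = 1`):
`ν(f) ≤ (C/σ)² 2^{α−1} M_{2α} d^{1−α}`. -/
theorem stmt2 (d : ℕ) (hd : 1 ≤ d)
    (θ : Fin d → ℝ) (hθ : ∑ j, θ j ^ 2 = 1)
    (g : ℝ → ℝ) (C α : ℝ) (hα0 : 0 < α) (hα1 : α < 1)
    (hg : ∀ y y' : ℝ, |g y - g y'| ≤ C * |y - y'| ^ α)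
    (f : (Fin d → ℝ) → ℝ) (hf : ∀ x, f x = g (∑ j, θ j * x j))
    (hσ : 0 < variance f (stdGaussian d)) :
    meanDim d f ≤ (C / Real.sqrt (variance f (stdGaussian d))) ^ 2
      * 2 ^ (α - 1) * Mmom (2 * α) * (d : ℝ) ^ (1 - α) := by
  have hC : 0 ≤ C := by
    have h := hg 1 0
    have he : C * |1 - (0:ℝ)| ^ α = C := by
      norm_num
    calc (0:ℝ) ≤ |g 1 - g 0| := abs_nonneg _
      _ ≤ C * |1 - (0:ℝ)| ^ α := h
      _ = C := he
  have hM : 0 < Mmom (2*α) := Mmom_pos (by linarith)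
  have hconst : (0:ℝ) ≤ 2 ^ (α-1) * C^2 * Mmom (2*α) :=
    mul_nonneg (mul_nonneg (Real.rpow_nonneg two_pos.le _) (sq_nonneg _)) hM.le
  have hsum : ∑ j, sobolTau d f j
      ≤ 2 ^ (α-1) * C^2 * Mmom (2*α) * (d:ℝ) ^ (1-α) := by
    calc ∑ j, sobolTau d f j
        ≤ ∑ j, 2 ^ (α-1) * C^2 * Mmom (2*α) * |θ j| ^ (2*α) :=
          Finset.sum_le_sum fun j _ => tau_bound d θ g C α hα0 hα1 hg f hf j
      _ = 2 ^ (α-1) * C^2 * Mmom (2*α) * ∑ j, |θ j| ^ (2*α) := by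
          rw [← Finset.mul_sum]
      _ ≤ 2 ^ (α-1) * C^2 * Mmom (2*α) * (d:ℝ) ^ (1-α) :=
          mul_le_mul_of_nonneg_left (sum_rpow_le d hd θ hθ hα0 hα1) hconst
  unfold meanDim
  have hrhs : (C / Real.sqrt (variance f (stdGaussian d))) ^ 2 * 2 ^ (α - 1)
        * Mmom (2 * α) * (d:ℝ) ^ (1 - α)
      = (2 ^ (α-1) * C^2 * Mmom (2*α) * (d:ℝ) ^ (1-α)) / variance f (stdGaussian d) := by
    rw [div_pow, Real.sq_sqrt hσ.le]
    ring
  rw [hrhs]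
  exact (div_le_div_iff_of_pos_right hσ).mpr hsum

end
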